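/- Let U(t) ∈ ℂ^{n×r} with U(t)†U(t) = Id_r, σ(t) := E[Y_t Y_t†] positive definite r×r, and define ρ_LR(t) := U(t)σ(t)U(t)†. If Y_t satisfies dY = U†(t)a(U(t)Y,t)dt + Σ_j U†(t)b_j(U(t)Y,t)dW_j with (a,b_j) satisfying the unraveling condition a(x,t)x† + xa(x,t)† + Σ_j b_j(x,t)b_j(x,t)† = L(xx†), then dσ/dt = U(t)† L(U(t)σ(t)U(t)†) U(t). -/

import Mathlib

open Matrix MeasureTheory Finset
open scoped ComplexOrder

attribute [local instance] Matrix.frobeniusNormedAddCommGroup Matrix.frobeniusNormedSpace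

/-- The outer product `v w†` of two complex vectors. -/
noncomputable def outerProd {n m : ℕ} (v : Fin n → ℂ) (w : Fin m → ℂ) :
    Matrix (Fin n) (Fin m) ℂ :=
  Matrix.of fun i j => v i * star (w j)

/-- The Lindblad superoperator `L(ρ) = −i[H,ρ] + Σ_k (L_kρL_k† − ½{L_k†L_k,ρ})`. -/
noncomputable def lindblad {n K : ℕ} (H : Matrix (Fin n) (Fin n) ℂ)
    (L : Fin K → Matrix (Fin n) (Fin n) ℂ) (ρ : Matrix (Fin n) (Fin n) ℂ) :
    Matrix (Fin n) (Fin n) ℂ :=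
  (-Complex.I) • (H * ρ - ρ * H) +
    ∑ k, (L k * ρ * (L k)ᴴ - (1 / 2 : ℂ) • ((L k)ᴴ * L k * ρ + ρ * ((L k)ᴴ * L k)))

lemma mul_outer {n m p : ℕ} (A : Matrix (Fin n) (Fin m) ℂ) (v : Fin m → ℂ) (w : Fin p → ℂ) :
    A * outerProd v w = outerProd (A.mulVec v) w := by
  ext i j
  simp [outerProd, Matrix.mul_apply, Matrix.mulVec, dotProduct, Finset.sum_mul, mul_assoc]

lemma outer_mul {n m p : ℕ} (v : Fin n → ℂ) (A : Matrix (Fin m) (Fin p) ℂ) (w : Fin p → ℂ) :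
    outerProd v (A.mulVec w) = outerProd v w * Aᴴ := by
  ext i j
  simp [outerProd, Matrix.mul_apply, Matrix.mulVec, dotProduct, Finset.mul_sum, star_sum,
    mul_comm, mul_left_comm]

/-- Left multiplication by a fixed matrix, as a linear map. -/
noncomputable def leftMulLM {m n p : ℕ} (A : Matrix (Fin p) (Fin m) ℂ) :
    Matrix (Fin m) (Fin n) ℂ →ₗ[ℂ] Matrix (Fin p) (Fin n) ℂ where
  toFun M := A * M
  map_add' B C := Matrix.mul_add A B C
  map_smul' c B := Matrix.mul_smul A c B

/-- Right multiplication by a fixed matrix, as a linear map. -/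
noncomputable def rightMulLM {m n p : ℕ} (A : Matrix (Fin n) (Fin p) ℂ) :
    Matrix (Fin m) (Fin n) ℂ →ₗ[ℂ] Matrix (Fin m) (Fin p) ℂ where
  toFun M := M * A
  map_add' B C := Matrix.add_mul B C A
  map_smul' c B := Matrix.smul_mul c B A

/-- The Lindblad superoperator as a linear map. -/
noncomputable def lindbladLM {n K : ℕ} (H : Matrix (Fin n) (Fin n) ℂ)
    (L : Fin K → Matrix (Fin n) (Fin n) ℂ) :
    Matrix (Fin n) (Fin n) ℂ →ₗ[ℂ] Matrix (Fin n) (Fin n) ℂ :=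
  (-Complex.I) • (leftMulLM H - rightMulLM H) +
    ∑ k, ((rightMulLM ((L k)ᴴ)).comp (leftMulLM (L k)) -
      (1 / 2 : ℂ) • (leftMulLM ((L k)ᴴ * L k) + rightMulLM ((L k)ᴴ * L k)))

lemma lindbladLM_apply {n K : ℕ} (H : Matrix (Fin n) (Fin n) ℂ)
    (L : Fin K → Matrix (Fin n) (Fin n) ℂ) (ρ : Matrix (Fin n) (Fin n) ℂ) :
    lindbladLM H L ρ = lindblad H L ρ := by
  simp [lindbladLM, lindblad, leftMulLM, rightMulLM, LinearMap.sum_apply, Matrix.mul_assoc,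
    smul_sub]

theorem lowrank_second_moment_evolution (n r N K : ℕ)
    (H : Matrix (Fin n) (Fin n) ℂ) (hH : Hᴴ = H)
    (L : Fin K → Matrix (Fin n) (Fin n) ℂ)
    (a : (Fin n → ℂ) → ℝ → (Fin n → ℂ))
    (b : Fin N → (Fin n → ℂ) → ℝ → (Fin n → ℂ))
    (U : Matrix (Fin n) (Fin r) ℂ) (hU : Uᴴ * U = 1)
    (θ : ℝ → Measure (Fin r → ℂ)) (t₀ : ℝ)
    (hint : @Integrable _ _ SeminormedAddGroup.toContinuousENorm _ _ (fun y => outerProd y y) (θ t₀))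
    (hpos : (∫ y, outerProd y y ∂θ t₀).PosDef)
    (hIto : HasDerivAt (fun t => ∫ y, outerProd y y ∂θ t)
      (∫ y, (outerProd y (Uᴴ.mulVec (a (U.mulVec y) t₀)) +
          outerProd (Uᴴ.mulVec (a (U.mulVec y) t₀)) y +
          ∑ j, outerProd (Uᴴ.mulVec (b j (U.mulVec y) t₀))
            (Uᴴ.mulVec (b j (U.mulVec y) t₀))) ∂θ t₀) t₀)
    (hunravel : ∀ (x : Fin n → ℂ) (t : ℝ),
      outerProd (a x t) x + outerProd x (a x t) +
          ∑ j, outerProd (b j x t) (b j x t) =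
        lindblad H L (outerProd x x)) :
    HasDerivAt (fun t => ∫ y, outerProd y y ∂θ t)
      (Uᴴ * lindblad H L (U * (∫ y, outerProd y y ∂θ t₀) * Uᴴ) * U) t₀ := by
  -- the conjugated Lindblad map as a continuous linear map
  set Φlin : Matrix (Fin r) (Fin r) ℂ →ₗ[ℂ] Matrix (Fin r) (Fin r) ℂ :=
    (rightMulLM U).comp ((leftMulLM Uᴴ).comp ((lindbladLM H L).comp
      ((rightMulLM Uᴴ).comp (leftMulLM U)))) with hΦlin
  have hΦ : ∀ M : Matrix (Fin r) (Fin r) ℂ,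
      Φlin M = Uᴴ * lindblad H L (U * M * Uᴴ) * U := by
    intro M
    simp [hΦlin, leftMulLM, rightMulLM, lindbladLM_apply, LinearMap.comp_apply]
  -- pointwise identification of the Itô integrand with the conjugated Lindblad term
  have key : ∀ y : Fin r → ℂ,
      (outerProd y (Uᴴ.mulVec (a (U.mulVec y) t₀)) +
          outerProd (Uᴴ.mulVec (a (U.mulVec y) t₀)) y +
          ∑ j, outerProd (Uᴴ.mulVec (b j (U.mulVec y) t₀))
            (Uᴴ.mulVec (b j (U.mulVec y) t₀))) =
        Uᴴ * lindblad H L (U * outerProd y y * Uᴴ) * U := by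
    intro y
    set x := U.mulVec y with hxdef
    have hx : U * outerProd y y * Uᴴ = outerProd x x := by
      rw [mul_outer, ← outer_mul]
    have h1 : outerProd y (Uᴴ.mulVec (a x t₀)) = Uᴴ * outerProd x (a x t₀) * U := by
      rw [outer_mul, conjTranspose_conjTranspose, hxdef, ← mul_outer, ← Matrix.mul_assoc,
        hU, Matrix.one_mul]
    have h2 : outerProd (Uᴴ.mulVec (a x t₀)) y = Uᴴ * outerProd (a x t₀) x * U := by
      rw [← mul_outer, hxdef, outer_mul, Matrix.mul_assoc, Matrix.mul_assoc, hU,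
        Matrix.mul_one]
    have h3 : ∀ v : Fin n → ℂ,
        outerProd (Uᴴ.mulVec v) (Uᴴ.mulVec v) = Uᴴ * outerProd v v * U := by
      intro v
      rw [← mul_outer, outer_mul, conjTranspose_conjTranspose, Matrix.mul_assoc]
    rw [hx, ← hunravel x t₀, h1, h2]
    simp only [h3]
    simp only [Matrix.mul_add, Matrix.add_mul, Matrix.mul_sum, Matrix.sum_mul]
    abel
  -- pass the linear map through the integral
  have hcomm := (LinearMap.toContinuousLinearMap Φlin).integral_comp_comm hint
  have heq : (∫ y, (outerProd y (Uᴴ.mulVec (a (U.mulVec y) t₀)) +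
          outerProd (Uᴴ.mulVec (a (U.mulVec y) t₀)) y +
          ∑ j, outerProd (Uᴴ.mulVec (b j (U.mulVec y) t₀))
            (Uᴴ.mulVec (b j (U.mulVec y) t₀))) ∂θ t₀) =
      Uᴴ * lindblad H L (U * (∫ y, outerProd y y ∂θ t₀) * Uᴴ) * U := by
    calc (∫ y, (outerProd y (Uᴴ.mulVec (a (U.mulVec y) t₀)) +
          outerProd (Uᴴ.mulVec (a (U.mulVec y) t₀)) y +
          ∑ j, outerProd (Uᴴ.mulVec (b j (U.mulVec y) t₀))
            (Uᴴ.mulVec (b j (U.mulVec y) t₀))) ∂θ t₀)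
        = ∫ y, LinearMap.toContinuousLinearMap Φlin (outerProd y y) ∂θ t₀ := by
          refine integral_congr_ae (Filter.Eventually.of_forall fun y => ?_)
          simp only [LinearMap.coe_toContinuousLinearMap', hΦ, key]
      _ = LinearMap.toContinuousLinearMap Φlin (∫ y, outerProd y y ∂θ t₀) := hcomm
      _ = Uᴴ * lindblad H L (U * (∫ y, outerProd y y ∂θ t₀) * Uᴴ) * U := by
          rw [LinearMap.coe_toContinuousLinearMap', hΦ]
  rw [← heq]
  exact hIto
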